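/- Let w, w' ∈ R^n with ‖w − w'‖₂ ≤ Δ, ‖w‖₂, ‖w'‖₂ ≥ σ_min > 0, ‖w‖₂ ≤ ‖w'‖₂, and let z ~ N(0, ‖w‖₂² I_m). Then for all z, P_Z(z)/P_{Z'}(z) ≥ exp(−(‖z‖₂²/‖w‖₂²)·(Δ/σ_min)). -/
import Mathlib


open Real

/-- Density of the multivariate Gaussian `N(0, σ² I_m)` at `z ∈ ℝᵐ`. -/
noncomputable def gaussDensity (m : ℕ) (σ : ℝ) (z : Fin m → ℝ) : ℝ :=
  (2 * Real.pi * σ ^ 2) ^ (-(m : ℝ) / 2) * Real.exp (-(∑ j, z j ^ 2) / (2 * σ ^ 2))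

/-- pointwise lower bound on the Gaussian density ratio. -/
theorem stmt7 (n m : ℕ) (Δ σmin : ℝ) (hΔ : 0 < Δ) (hσ : 0 < σmin)
    (w w' : EuclideanSpace ℝ (Fin n))
    (hnear : ‖w - w'‖ ≤ Δ) (hminw : σmin ≤ ‖w‖) (hminw' : σmin ≤ ‖w'‖)
    (hle : ‖w‖ ≤ ‖w'‖) :
    ∀ z : Fin m → ℝ,
      Real.exp (-((∑ j, z j ^ 2) / ‖w‖ ^ 2) * (Δ / σmin))
        ≤ gaussDensity m ‖w‖ z / gaussDensity m ‖w'‖ z := by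
  intro z
  set a := ‖w‖ with ha'
  set b := ‖w'‖ with hb'
  have ha : 0 < a := lt_of_lt_of_le hσ hminw
  have hb : 0 < b := lt_of_lt_of_le hσ hminw'
  have hba : b - a ≤ Δ := by
    have h1 : |b - a| ≤ ‖w' - w‖ := abs_norm_sub_norm_le w' w
    have h2 : ‖w' - w‖ = ‖w - w'‖ := norm_sub_rev _ _
    have := (abs_le.mp h1).2
    linarith
  set S := ∑ j, z j ^ 2 with hSdef
  have hS : 0 ≤ S := Finset.sum_nonneg fun j _ => sq_nonneg _
  unfold gaussDensity
  rw [mul_div_mul_comm]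
  have hπ : 0 < Real.pi := Real.pi_pos
  have h1 : 1 ≤ (2 * Real.pi * a ^ 2) ^ (-(m : ℝ) / 2) /
      (2 * Real.pi * b ^ 2) ^ (-(m : ℝ) / 2) := by
    rw [one_le_div (Real.rpow_pos_of_pos (by positivity) _)]
    apply Real.rpow_le_rpow_of_nonpos (by positivity)
    · have hab2 : a ^ 2 ≤ b ^ 2 := by nlinarith
      nlinarith [mul_le_mul_of_nonneg_left hab2 hπ.le]
    · have : (0:ℝ) ≤ (m:ℝ) := Nat.cast_nonneg m
      linarith
  have h2 : Real.exp (-(S / a ^ 2) * (Δ / σmin)) ≤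
      Real.exp (-S / (2 * a ^ 2)) / Real.exp (-S / (2 * b ^ 2)) := by
    rw [← Real.exp_sub]
    apply Real.exp_le_exp.mpr
    have key : 1 / (2 * a ^ 2) - 1 / (2 * b ^ 2) ≤ Δ / (a ^ 2 * σmin) := by
      rw [div_sub_div _ _ (by positivity) (by positivity),
        div_le_div_iff₀ (by positivity) (by positivity)]
      have hfac : (b - a) * (b + a) ≤ Δ * (2 * b) :=
        mul_le_mul hba (by linarith) (by linarith) hΔ.le
      nlinarith [mul_le_mul_of_nonneg_right hfac (mul_nonneg (sq_nonneg a) hσ.le),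
        mul_le_mul_of_nonneg_left hminw'
          (mul_nonneg hΔ.le (mul_nonneg hb.le (sq_nonneg a)))]
    have hkey2 : S * (1 / (2 * a ^ 2) - 1 / (2 * b ^ 2)) ≤ S * (Δ / (a ^ 2 * σmin)) :=
      mul_le_mul_of_nonneg_left key hS
    have e1 : S * (1 / (2 * a ^ 2) - 1 / (2 * b ^ 2)) =
        -(-S / (2 * a ^ 2) - -S / (2 * b ^ 2)) := by ring
    have e2 : S * (Δ / (a ^ 2 * σmin)) = -(-(S / a ^ 2) * (Δ / σmin)) := by
      field_simp
    rw [e1, e2] at hkey2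
    linarith
  have hexp : 0 ≤ Real.exp (-S / (2 * a ^ 2)) / Real.exp (-S / (2 * b ^ 2)) := by
    positivity
  calc Real.exp (-(S / a ^ 2) * (Δ / σmin))
      ≤ Real.exp (-S / (2 * a ^ 2)) / Real.exp (-S / (2 * b ^ 2)) := h2
    _ ≤ ((2 * Real.pi * a ^ 2) ^ (-(m : ℝ) / 2) /
        (2 * Real.pi * b ^ 2) ^ (-(m : ℝ) / 2)) *
        (Real.exp (-S / (2 * a ^ 2)) / Real.exp (-S / (2 * b ^ 2))) :=
      le_mul_of_one_le_left hexp h1
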